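/- Let a : ℝ → ℝ be C¹ and convex, u : ℝ → ℝ bounded measurable, ρ_ε a nonnegative mollifier with unit mass supported in [−ε,ε]. Then for every x: (a∘u)⋆ρ_ε(x) − a((u⋆ρ_ε)(x)) ≤ ∫ (∫_{u(x)}^{u(z)} (a'(τ) − a'(u(x))) dτ) ρ_ε(x − z) dz. -/

import Mathlib

open MeasureTheory intervalIntegral

lemma tangent_le_aux (a : ℝ → ℝ) (hconv : ConvexOn ℝ Set.univ a)
    (hd : Differentiable ℝ a) (p q : ℝ) :
    a p + deriv a p * (q - p) ≤ a q := by
  rcases lt_trichotomy p q with h | h | h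
  · have := hconv.deriv_le_slope (Set.mem_univ p) (Set.mem_univ q) h (hd p)
    rw [slope_def_field] at this
    have hpq : 0 < q - p := by linarith
    rw [le_div_iff₀ hpq] at this
    linarith
  · simp [h]
  · have := hconv.slope_le_deriv (Set.mem_univ q) (Set.mem_univ p) h (hd p)
    rw [slope_def_field] at this
    have hqp : 0 < p - q := by linarith
    rw [div_le_iff₀ hqp] at this
    nlinarith

/-- Commutator estimate: for `a` C¹ convex, `u` bounded measurable and `ρ_ε` a nonnegative
mollifier of unit mass supported in `[−ε,ε]`,
`(a∘u)⋆ρ_ε(x) − a((u⋆ρ_ε)(x)) ≤ ∫ (∫_{u(x)}^{u(z)} (a'(τ)−a'(u(x))) dτ) ρ_ε(x−z) dz`. -/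
theorem stmt7 (a : ℝ → ℝ) (ha : ContDiff ℝ 1 a) (hconv : ConvexOn ℝ Set.univ a)
    (u : ℝ → ℝ) (hu : Measurable u) (hb : ∃ M, ∀ x, |u x| ≤ M)
    (ε : ℝ) (hε : 0 < ε)
    (ρε : ℝ → ℝ) (hρ0 : ∀ x, 0 ≤ ρε x) (hρint : Integrable ρε)
    (hρ1 : ∫ x, ρε x = 1) (hsupp : Function.support ρε ⊆ Set.Icc (-ε) ε)
    (x : ℝ) :
    (∫ z, a (u z) * ρε (x - z)) - a (∫ z, u z * ρε (x - z))
      ≤ ∫ z, (∫ τ in (u x)..(u z), (deriv a τ - deriv a (u x))) * ρε (x - z) := by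
  obtain ⟨M, hM⟩ := hb
  have hdiff : Differentiable ℝ a := ha.differentiable one_ne_zero
  have hcd : Continuous (deriv a) := ha.continuous_deriv le_rfl
  have hρx : Integrable (fun z => ρε (x - z)) := hρint.comp_sub_left x
  have hρx1 : ∫ z, ρε (x - z) = 1 := by
    rw [integral_sub_left_eq_self ρε volume x]; exact hρ1
  -- bound for a ∘ u
  obtain ⟨C, hC⟩ : ∃ C, ∀ y ∈ Set.Icc (-M) M, ‖a y‖ ≤ C :=
    (isCompact_Icc).exists_bound_of_continuousOn ha.continuous.continuousOn
  have huIcc : ∀ z, u z ∈ Set.Icc (-M) M := fun z => abs_le.mp (hM z)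
  -- integrabilities
  have ham : AEStronglyMeasurable (fun z => a (u z)) volume :=
    (ha.continuous.measurable.comp hu).aestronglyMeasurable
  have hA : Integrable (fun z => a (u z) * ρε (x - z)) :=
    hρx.bdd_mul (c := C) ham (Filter.Eventually.of_forall fun z => hC _ (huIcc z))
  have hU : Integrable (fun z => u z * ρε (x - z)) :=
    hρx.bdd_mul (c := M) hu.aestronglyMeasurable (Filter.Eventually.of_forall fun z => by
      simpa [Real.norm_eq_abs] using hM z)
  set v : ℝ := ∫ z, u z * ρε (x - z) with hv
  set c1 : ℝ := a (u x) with hc1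
  set c2 : ℝ := deriv a (u x) with hc2
  -- pointwise identity for the inner integral
  have key : ∀ z, (∫ τ in (u x)..(u z), (deriv a τ - deriv a (u x)))
      = a (u z) - c1 - c2 * (u z - u x) := by
    intro z
    rw [intervalIntegral.integral_sub (hcd.intervalIntegrable _ _)
        (intervalIntegrable_const)]
    rw [intervalIntegral.integral_deriv_eq_sub (fun t _ => hdiff t)
        (hcd.intervalIntegrable _ _)]
    rw [intervalIntegral.integral_const]
    simp [smul_eq_mul]; ring
  -- integrable affine part
  have hG : Integrable (fun z => (c1 + c2 * (u z - u x)) * ρε (x - z)) := by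
    refine hρx.bdd_mul (c := |c1| + |c2| * (M + |u x|)) ?_ (Filter.Eventually.of_forall fun z => ?_)
    · exact ((measurable_const.add ((hu.sub measurable_const).const_mul c2))).aestronglyMeasurable
    · have h1 : |u z - u x| ≤ M + |u x| := by
        calc |u z - u x| ≤ |u z| + |u x| := abs_sub _ _
          _ ≤ M + |u x| := by linarith [hM z]
      calc ‖c1 + c2 * (u z - u x)‖ ≤ |c1| + |c2 * (u z - u x)| := abs_add_le _ _
        _ = |c1| + |c2| * |u z - u x| := by rw [abs_mul]
        _ ≤ |c1| + |c2| * (M + |u x|) := by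
            have := abs_nonneg c2
            nlinarith
  -- compute the RHS
  have hRHS : ∫ z, (∫ τ in (u x)..(u z), (deriv a τ - deriv a (u x))) * ρε (x - z)
      = (∫ z, a (u z) * ρε (x - z)) - (c1 + c2 * (v - u x)) := by
    have : ∀ z, (∫ τ in (u x)..(u z), (deriv a τ - deriv a (u x))) * ρε (x - z)
        = a (u z) * ρε (x - z) - (c1 + c2 * (u z - u x)) * ρε (x - z) := by
      intro z; rw [key z]; ring
    rw [integral_congr_ae (Filter.Eventually.of_forall this),
      integral_sub hA hG]
    congr 1
    have : ∀ z, (c1 + c2 * (u z - u x)) * ρε (x - z)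
        = (c1 - c2 * u x) * ρε (x - z) + c2 * (u z * ρε (x - z)) := by
      intro z; ring
    rw [integral_congr_ae (Filter.Eventually.of_forall this),
      integral_add (hρx.const_mul _) (hU.const_mul c2),
      MeasureTheory.integral_const_mul, MeasureTheory.integral_const_mul, hρx1, ← hv]
    ring
  rw [hRHS]
  have := tangent_le_aux a hconv hdiff (u x) v
  linarith
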